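/- Let A be a commutative associative unital algebra over ℂ and D a derivation of A. Then the superalgebra J_{1/2}(A,D) = A ⊕ ηA with product a∘b = ab, a∘(ηb) = (1/2)η(ab), (ηa)∘(ηb) = aD(b) - D(a)b is a Lie antialgebra, i.e. it is supercommutative and satisfies axioms (LA0)–(LA3). -/
import Mathlib


/-- The parity grading on `A × A`: `A × 0` is the even part, `0 × A` the odd part. -/
def evenodd (A : Type*) [AddCommGroup A] [Module ℂ A] (i : ZMod 2) :
    Submodule ℂ (A × A) :=
  if i = 0 then (⊤ : Submodule ℂ A).prod ⊥ else (⊥ : Submodule ℂ A).prod ⊤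

lemma mem_even {A : Type*} [AddCommGroup A] [Module ℂ A] {u : A × A} :
    u ∈ evenodd A 0 ↔ u.2 = 0 := by
  simp [evenodd, Submodule.mem_prod]

lemma mem_odd {A : Type*} [AddCommGroup A] [Module ℂ A] {u : A × A} :
    u ∈ evenodd A 1 ↔ u.1 = 0 := by
  simp [evenodd, Submodule.mem_prod]

/-- The product of the half-unital Jordan superalgebra `J_{1/2}(A,D) = A ⊕ ηA`:
`a∘b = ab`, `a∘(ηb) = (1/2)η(ab)`, `(ηa)∘(ηb) = aD(b) - D(a)b`. -/
noncomputable def jmulHalf {A : Type*} [CommRing A] [Algebra ℂ A]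
    (D : A →ₗ[ℂ] A) (u v : A × A) : A × A :=
  (u.1 * v.1 + (u.2 * D v.2 - D u.2 * v.2), (1/2 : ℂ) • (u.1 * v.2 + u.2 * v.1))

/-- For a commutative associative unital ℂ-algebra `A` with derivation `D`,
`J_{1/2}(A,D)` is a Lie antialgebra: it is a supercommutative superalgebra (graded and
supercommutative) satisfying (LA0)-(LA3). -/
theorem stmt_2 (A : Type*) [CommRing A] [Algebra ℂ A]
    (D : A →ₗ[ℂ] A) (hD : ∀ a b : A, D (a * b) = a * D b + D a * b) :
    (∀ (i j : ZMod 2) (u v : A × A), u ∈ evenodd A i → v ∈ evenodd A j →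
        jmulHalf D u v ∈ evenodd A (i + j)) ∧
    (∀ (i j : ZMod 2) (u v : A × A), u ∈ evenodd A i → v ∈ evenodd A j →
        jmulHalf D u v = ((-1 : ℂ) ^ (i.val * j.val)) • jmulHalf D v u) ∧
    (∀ x1 x2 x3 : A × A, x1 ∈ evenodd A 0 → x2 ∈ evenodd A 0 → x3 ∈ evenodd A 0 →
        jmulHalf D x1 (jmulHalf D x2 x3) = jmulHalf D (jmulHalf D x1 x2) x3) ∧
    (∀ x1 x2 y : A × A, x1 ∈ evenodd A 0 → x2 ∈ evenodd A 0 → y ∈ evenodd A 1 →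
        jmulHalf D x1 (jmulHalf D x2 y) = (1/2 : ℂ) • jmulHalf D (jmulHalf D x1 x2) y) ∧
    (∀ x y1 y2 : A × A, x ∈ evenodd A 0 → y1 ∈ evenodd A 1 → y2 ∈ evenodd A 1 →
        jmulHalf D x (jmulHalf D y1 y2) =
          jmulHalf D (jmulHalf D x y1) y2 + jmulHalf D y1 (jmulHalf D x y2)) ∧
    (∀ y1 y2 y3 : A × A, y1 ∈ evenodd A 1 → y2 ∈ evenodd A 1 → y3 ∈ evenodd A 1 →
        jmulHalf D y1 (jmulHalf D y2 y3) + jmulHalf D y2 (jmulHalf D y3 y1)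
          + jmulHalf D y3 (jmulHalf D y1 y2) = 0) := by
  have hcase : ∀ i : ZMod 2, i = 0 ∨ i = 1 := by decide
  have hval0 : ZMod.val (0 : ZMod 2) = 0 := rfl
  have hval1 : ZMod.val (1 : ZMod 2) = 1 := rfl
  refine ⟨?_, ?_, ?_, ?_, ?_, ?_⟩
  · intro i j u v hu hv
    rcases hcase i with rfl | rfl <;> rcases hcase j with rfl | rfl <;>
      [skip; skip; skip; rw [show (1:ZMod 2)+1 = 0 from by decide]] <;>
      simp only [mem_even, mem_odd] at hu hv ⊢ <;>
      simp [jmulHalf, hu, hv, zero_add, add_zero] <;> simp [mem_even, mem_odd]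
  · intro i j u v hu hv
    rcases hcase i with rfl | rfl <;> rcases hcase j with rfl | rfl <;>
      simp only [mem_even, mem_odd] at hu hv <;>
      simp only [hval0, hval1, Nat.mul_zero, Nat.zero_mul, Nat.mul_one, pow_zero, pow_one,
        one_smul] <;>
      simp [jmulHalf, hu, hv, Prod.ext_iff, Prod.smul_def, smul_add, smul_sub, mul_comm]
  · -- LA0
    rintro ⟨a1,b1⟩ ⟨a2,b2⟩ ⟨a3,b3⟩ h1 h2 h3
    simp only [mem_even] at h1 h2 h3
    subst h1; subst h2; subst h3
    simp [jmulHalf, Prod.ext_iff, mul_assoc]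
  · -- LA1
    rintro ⟨a1,b1⟩ ⟨a2,b2⟩ ⟨a3,b3⟩ h1 h2 h3
    simp only [mem_even, mem_odd] at h1 h2 h3
    subst h1; subst h2; subst h3
    simp [jmulHalf, Prod.ext_iff, Prod.smul_def, mul_smul_comm, smul_smul, mul_assoc]
  · -- LA2
    rintro ⟨a,b⟩ ⟨u1,p⟩ ⟨u2,q⟩ h1 h2 h3
    simp only [mem_even, mem_odd] at h1 h2 h3
    subst h1; subst h2; subst h3
    have hc : (algebraMap ℂ A (1/2)) * 2 = 1 := by
      rw [show (2:A) = algebraMap ℂ A 2 from (map_ofNat _ 2).symm, ← map_mul]; norm_num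
    simp only [jmulHalf, Prod.ext_iff, Prod.mk_add_mk, map_smul, map_zero,
      mul_zero, zero_mul, add_zero, zero_add, sub_zero, zero_sub, smul_zero, neg_zero,
      smul_mul_assoc, mul_smul_comm]
    constructor
    · rw [hD a p, hD a q]
      simp only [Algebra.smul_def]
      set c := algebraMap ℂ A (1/2) with hcdef
      linear_combination (a * D p * q - a * p * D q) * hc
    · simp only [Algebra.smul_def]
  · -- LA3
    rintro ⟨u1,p1⟩ ⟨u2,p2⟩ ⟨u3,p3⟩ h1 h2 h3
    simp only [mem_odd] at h1 h2 h3
    subst h1; subst h2; subst h3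
    simp only [jmulHalf, Prod.ext_iff, Prod.mk_add_mk, map_zero, mul_zero, zero_mul,
      add_zero, zero_add, sub_zero, zero_sub, smul_zero, neg_zero, Prod.fst_zero,
      Prod.snd_zero]
    refine ⟨by simp, ?_⟩
    rw [← smul_add, ← smul_add,
      show p1 * (p2 * D p3 - D p2 * p3) + p2 * (p3 * D p1 - D p3 * p1)
        + p3 * (p1 * D p2 - D p1 * p2) = 0 from by ring, smul_zero]
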